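/- arXiv:2304.11691 — 2 statements merged into one kernel-verified Lean document; each statement's English description precedes it below -/
import Mathlib

section
/- Let α > 1 and let G be a multigraph with maximum α-exponential degree Δ^ex = Δ^ex(α, G) ≥ α. Then there exists a bipartite covering H = {H_1, …, H_m} of G with m ≤ log₂(Δ^ex) / (1 − log₂(1 + α⁻¹)). -/
/-- The `α`-exponential degree of a vertex `v` in the multigraph with multiplicity
function `G`: `d^ex_G(α, v) = ∑_{u ∈ N(v)} α^{μ(uv)}` (only actual neighbours, i.e.
vertices `u` with `G v u ≥ 1`, contribute). -/
noncomputable def expDeg {V : Type*} [Fintype V] (α : ℝ) (G : V → V → ℕ) (v : V) : ℝ :=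
  ∑ u ∈ Finset.univ.filter (fun u => 0 < G v u), α ^ (G v u)

/-- The maximum `α`-exponential degree `Δ^ex(α, G)` of a multigraph. -/
noncomputable def maxExpDeg {V : Type*} [Fintype V] [Nonempty V]
    (α : ℝ) (G : V → V → ℕ) : ℝ :=
  Finset.univ.sup' Finset.univ_nonempty (expDeg α G)

/- STATEMENT 10 (covering a multigraph by few bipartite graphs).
A multigraph on a finite vertex set `V` is a symmetric, loopless multiplicity function
`G : V → V → ℕ`.  If `α > 1` and `Δ^ex(α, G) ≥ α`, then `G` has a bipartite covering
`H_1, …, H_m` (given by pairs of disjoint bipartition classes `(A i, B i)`, where each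
edge `xy` must be separated by at least `G x y` of the pairs) with
`m ≤ log₂(Δ^ex) / (1 − log₂(1 + α⁻¹))`. -/

open Finset in
lemma sum_pow_hammingDist (m : ℕ) (x : ℝ) (c : Fin m → Bool) :
    ∑ w : Fin m → Bool, x ^ hammingDist w c = (1 + x) ^ m := by
  have h : ∑ w : Fin m → Bool, x ^ hammingDist w c
      = ∑ s : Finset (Fin m), x ^ s.card := by
    apply Finset.sum_nbij' (i := fun w => ({i | w i ≠ c i} : Finset (Fin m)))
      (j := fun s => fun i => if i ∈ s then !(c i) else c i)
    · intro w _; exact mem_univ _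
    · intro s _; exact mem_univ _
    · intro w _
      funext i
      by_cases h : w i = c i
      · simp [h]
      · cases hw : w i <;> cases hc : c i <;> simp_all
    · intro s _
      ext i
      by_cases h : i ∈ s
      · simp only [h, if_true, mem_filter, mem_univ, true_and]
        cases c i <;> simp
      · simp [h]
    · intro w _
      rfl
  rw [h]
  have := Fintype.sum_pow_mul_eq_add_pow (Fin m) x (1 : ℝ)
  simp only [one_pow, mul_one, Fintype.card_fin] at this
  rw [this, add_comm]

open Finset in
lemma exists_good_word {V : Type*} [Fintype V] [DecidableEq V] (m : ℕ) (α : ℝ) (hα : 1 < α)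
    (f : V → ℕ) (c : V → (Fin m → Bool)) (S : Finset V)
    (hb : (∑ u ∈ S.filter (fun u => 0 < f u), α ^ f u) * α⁻¹ * (1 + α⁻¹) ^ m < 2 ^ m) :
    ∃ w : Fin m → Bool, ∀ u ∈ S, f u ≤ hammingDist w (c u) := by
  by_contra h
  push_neg at h
  have hα0 : 0 < α := lt_trans one_pos hα
  have hαne : α ≠ 0 := ne_of_gt hα0
  set T := S.filter (fun u => 0 < f u) with hT
  have key : ∀ w : Fin m → Bool,
      (1 : ℝ) ≤ ∑ u ∈ T, α ^ ((f u : ℤ) - 1 - hammingDist w (c u)) := by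
    intro w
    obtain ⟨u, hu, hlt⟩ := h w
    have huf : 0 < f u := lt_of_le_of_lt (Nat.zero_le _) hlt
    refine le_trans ?_ (Finset.single_le_sum
      (f := fun u => α ^ ((f u : ℤ) - 1 - hammingDist w (c u)))
      (fun i _ => le_of_lt (zpow_pos hα0 _)) (mem_filter.mpr ⟨hu, huf⟩))
    apply one_le_zpow₀ hα.le
    omega
  have hcard : ((2 : ℝ) ^ m) = ∑ _w : Fin m → Bool, (1 : ℝ) := by
    simp [Finset.card_univ]
  have step1 : ((2:ℝ) ^ m) ≤ ∑ w : Fin m → Bool, ∑ u ∈ T,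
      α ^ ((f u : ℤ) - 1 - hammingDist w (c u)) := by
    rw [hcard]
    exact Finset.sum_le_sum (fun w _ => key w)
  have hrw : ∀ (w : Fin m → Bool) (u : V),
      α ^ ((f u : ℤ) - 1 - hammingDist w (c u))
        = α ^ f u * α⁻¹ * (α⁻¹) ^ (hammingDist w (c u)) := by
    intro w u
    rw [zpow_sub₀ hαne, zpow_sub₀ hαne, zpow_natCast, zpow_natCast, zpow_one]
    rw [div_div]
    rw [div_eq_mul_inv, mul_inv, ← mul_assoc, inv_pow]
  have step2 : (∑ w : Fin m → Bool, ∑ u ∈ T,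
      α ^ ((f u : ℤ) - 1 - hammingDist w (c u)))
      = (∑ u ∈ T, α ^ f u) * α⁻¹ * (1 + α⁻¹) ^ m := by
    simp_rw [hrw]
    rw [Finset.sum_comm]
    have : ∀ u ∈ T, ∑ w : Fin m → Bool, α ^ f u * α⁻¹ * (α⁻¹) ^ (hammingDist w (c u))
        = α ^ f u * α⁻¹ * (1 + α⁻¹) ^ m := by
      intro u _
      rw [← Finset.mul_sum, sum_pow_hammingDist m α⁻¹ (c u)]
    rw [Finset.sum_congr rfl this, ← Finset.sum_mul, ← Finset.sum_mul]
  rw [step2] at step1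
  exact absurd hb (not_lt.mpr step1)

open Finset in
lemma greedy {V : Type*} [Fintype V] [DecidableEq V] (m : ℕ) (α : ℝ) (hα : 1 < α)
    (G : V → V → ℕ) (hGsymm : ∀ x y, G x y = G y x) (hGloop : ∀ v, G v v = 0)
    (D : ℝ) (hD : ∀ v, expDeg α G v ≤ D)
    (hkey : D * α⁻¹ * (1 + α⁻¹) ^ m < 2 ^ m) (S : Finset V) :
    ∃ c : V → Fin m → Bool, ∀ x ∈ S, ∀ y ∈ S, G x y ≤ hammingDist (c x) (c y) := by
  have hα0 : 0 < α := lt_trans one_pos hα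
  have hmul0 : 0 ≤ α⁻¹ * (1 + α⁻¹) ^ m := by positivity
  induction S using Finset.induction_on with
  | empty => exact ⟨fun _ _ => false, by simp⟩
  | @insert a S haS ih =>
    obtain ⟨c, hc⟩ := ih
    have hsum : (∑ u ∈ S.filter (fun u => 0 < G a u), α ^ G a u) ≤ expDeg α G a := by
      apply Finset.sum_le_sum_of_subset_of_nonneg
      · exact Finset.filter_subset_filter _ (Finset.subset_univ S)
      · intro i _ _; positivity
    have hb : (∑ u ∈ S.filter (fun u => 0 < G a u), α ^ G a u) * α⁻¹ * (1 + α⁻¹) ^ m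
        < 2 ^ m := by
      calc (∑ u ∈ S.filter (fun u => 0 < G a u), α ^ G a u) * α⁻¹ * (1 + α⁻¹) ^ m
          = (∑ u ∈ S.filter (fun u => 0 < G a u), α ^ G a u) * (α⁻¹ * (1 + α⁻¹) ^ m) := by
            ring
        _ ≤ D * (α⁻¹ * (1 + α⁻¹) ^ m) :=
            mul_le_mul_of_nonneg_right ((hsum.trans (hD a))) hmul0
        _ = D * α⁻¹ * (1 + α⁻¹) ^ m := by ring
        _ < 2 ^ m := hkey
    obtain ⟨w, hw⟩ := exists_good_word m α hα (G a) c S hb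
    refine ⟨Function.update c a w, ?_⟩
    intro x hx y hy
    rcases Finset.mem_insert.mp hx with hxa | hxS
    · rcases Finset.mem_insert.mp hy with hya | hyS
      · rw [hxa, hya, hGloop]; exact Nat.zero_le _
      · have hya : y ≠ a := fun h => haS (h ▸ hyS)
        rw [hxa, Function.update_self, Function.update_of_ne hya]
        exact hw y hyS
    · rcases Finset.mem_insert.mp hy with hya | hyS
      · have hxa : x ≠ a := fun h => haS (h ▸ hxS)
        rw [hya, Function.update_self, Function.update_of_ne hxa, hammingDist_comm, hGsymm]
        exact hw x hxS
      · have hxa : x ≠ a := fun h => haS (h ▸ hxS)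
        have hya : y ≠ a := fun h => haS (h ▸ hyS)
        rw [Function.update_of_ne hxa, Function.update_of_ne hya]
        exact hc x hxS y hyS

open Finset in
theorem cover_bipartite_maxdeg {V : Type*} [Fintype V] [Nonempty V] [DecidableEq V]
    (α : ℝ) (hα : 1 < α) (G : V → V → ℕ)
    (hGsymm : ∀ x y, G x y = G y x) (hGloop : ∀ v, G v v = 0)
    (hΔ : α ≤ maxExpDeg α G) :
    ∃ (m : ℕ) (A B : Fin m → Finset V),
      (∀ i, Disjoint (A i) (B i)) ∧
      (∀ x y : V, G x y ≤ (Finset.univ.filter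
        (fun i => (x ∈ A i ∧ y ∈ B i) ∨ (x ∈ B i ∧ y ∈ A i))).card) ∧
      (m : ℝ) ≤ Real.logb 2 (maxExpDeg α G) / (1 - Real.logb 2 (1 + α⁻¹)) := by
  have hα0 : (0:ℝ) < α := lt_trans one_pos hα
  have hainv0 : (0:ℝ) < α⁻¹ := inv_pos.mpr hα0
  have hainv1 : α⁻¹ < 1 := inv_lt_one_of_one_lt₀ hα
  set D := maxExpDeg α G with hDdef
  have hD1 : (1:ℝ) < D := lt_of_lt_of_le hα hΔ
  have hD0 : (0:ℝ) < D := lt_trans one_pos hD1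
  set cl := Real.logb 2 (1 + α⁻¹) with hcldef
  have h1x : (1:ℝ) < 1 + α⁻¹ := by linarith
  have h1x0 : (0:ℝ) < 1 + α⁻¹ := by linarith
  have hcl0 : 0 < cl := Real.logb_pos one_lt_two h1x
  have hcl1 : cl < 1 := by
    have h2 : Real.logb 2 (1 + α⁻¹) < Real.logb 2 2 :=
      Real.logb_lt_logb one_lt_two h1x0 (by linarith)
    simpa [Real.logb_self_eq_one] using h2
  have hden : (0:ℝ) < 1 - cl := by linarith
  have hlogD : 0 ≤ Real.logb 2 D := Real.logb_nonneg one_lt_two hD1.le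
  set t := Real.logb 2 D / (1 - cl) with htdef
  have ht0 : 0 ≤ t := div_nonneg hlogD hden.le
  set m := ⌊t⌋₊ with hmdef
  have hmt : (m:ℝ) ≤ t := Nat.floor_le ht0
  -- the key numeric inequality
  have hm1 : t < (m:ℝ) + 1 := Nat.lt_floor_add_one t
  have hlog_lt : Real.logb 2 D < ((m:ℝ) + 1) * (1 - cl) := by
    rw [htdef] at hm1
    calc Real.logb 2 D = Real.logb 2 D / (1 - cl) * (1 - cl) := by
          field_simp
      _ < ((m:ℝ) + 1) * (1 - cl) := by
          exact mul_lt_mul_of_pos_right hm1 hden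
  have h2c : (2:ℝ) ^ cl = 1 + α⁻¹ := Real.rpow_logb two_pos (by norm_num) h1x0
  set β := (2:ℝ) ^ ((1:ℝ) - cl) with hβdef
  have hβ : β = 2 / (1 + α⁻¹) := by
    rw [hβdef, Real.rpow_sub two_pos, Real.rpow_one, h2c]
  have hβ0 : 0 < β := Real.rpow_pos_of_pos two_pos _
  have hDβ : D < β ^ (m + 1) := by
    calc D = (2:ℝ) ^ Real.logb 2 D := (Real.rpow_logb two_pos (by norm_num) hD0).symm
      _ < (2:ℝ) ^ (((m:ℝ) + 1) * (1 - cl)) :=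
          (Real.rpow_lt_rpow_left_iff one_lt_two).mpr hlog_lt
      _ = ((2:ℝ) ^ ((1:ℝ) - cl)) ^ ((m:ℝ) + 1) := by
          rw [mul_comm, Real.rpow_mul (by norm_num : (0:ℝ) ≤ 2)]
      _ = β ^ (m + 1) := by
          rw [show ((m:ℝ) + 1) = ((m + 1 : ℕ) : ℝ) by push_cast; ring,
            Real.rpow_natCast]
  have hkey : D * α⁻¹ * (1 + α⁻¹) ^ m < 2 ^ m := by
    have hpos : (0:ℝ) < α⁻¹ * (1 + α⁻¹) ^ m := by positivity
    calc D * α⁻¹ * (1 + α⁻¹) ^ m = D * (α⁻¹ * (1 + α⁻¹) ^ m) := by ring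
      _ < β ^ (m+1) * (α⁻¹ * (1 + α⁻¹) ^ m) := mul_lt_mul_of_pos_right hDβ hpos
      _ = 2 ^ m * (2 * α⁻¹ / (1 + α⁻¹)) := by
          rw [hβ, div_pow, pow_succ, pow_succ]
          field_simp
      _ ≤ 2 ^ m * 1 := by
          apply mul_le_mul_of_nonneg_left _ (by positivity)
          rw [div_le_one h1x0]
          linarith
      _ = 2 ^ m := mul_one _
  obtain ⟨c, hc⟩ := greedy m α hα G hGsymm hGloop D
    (fun v => Finset.le_sup' (expDeg α G) (mem_univ v)) hkey Finset.univ
  refine ⟨m, fun i => univ.filter (fun v => c v i = false),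
    fun i => univ.filter (fun v => c v i = true), ?_, ?_, ?_⟩
  · intro i
    apply Finset.disjoint_left.mpr
    intro v hv hv'
    simp only [mem_filter] at hv hv'
    rw [hv.2] at hv'
    exact absurd hv'.2 (by simp)
  · intro x y
    have heq : (univ.filter (fun i =>
        (x ∈ univ.filter (fun v => c v i = false) ∧ y ∈ univ.filter (fun v => c v i = true)) ∨
        (x ∈ univ.filter (fun v => c v i = true) ∧ y ∈ univ.filter (fun v => c v i = false))))
        = univ.filter (fun i => c x i ≠ c y i) := by
      apply Finset.filter_congr
      intro i _
      simp only [mem_filter, mem_univ, true_and]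
      cases hx : c x i <;> cases hy : c y i <;> simp
    rw [heq]
    exact hc x (mem_univ x) y (mem_univ y)
  · exact hmt
end

section
/- Let T = {(x,y) ∈ ℝ² : 0 ≤ x ≤ 1, 0 ≤ y ≤ x} and let 0 < ε < 1. Let S be a countable collection of axis-parallel squares each completely contained in T. If the Lebesgue measure of ⋃_{S ∈ S} S is at least (1−ε)/2, then Σ_{S ∈ S} ℓ(S) ≥ (1/2)·log₂(1/ε). In particular, if ⋃_{S ∈ S} S contains almost every point of T, then Σ_{S ∈ S} ℓ(S) diverges. -/
open MeasureTheory Set ENNReal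
open scoped Classical

namespace TriangleSquares

noncomputable section

def Jv (b l : ℕ → ℝ) (i : ℕ) : Set ℝ := Set.Icc (b i) (b i + l i)
def Iv (a l : ℕ → ℝ) (i : ℕ) : Set ℝ := Set.Icc (a i) (a i + l i)
def bad (a b l : ℕ → ℝ) (i : ℕ) : Set (ℝ × ℝ) :=
  (Iv a l i ×ˢ Jv b l i) ∪ (Jv b l i ×ˢ Iv a l i)
def G (a b l : ℕ → ℝ) (N : Set ℕ) : Set (ℝ × ℝ) :=
  {q : ℝ × ℝ | q.2 ∈ Set.Icc (0:ℝ) 1} ∩ ⋂ i ∈ N, (bad a b l i)ᶜ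
def alf (a b l : ℕ → ℝ) (N : Set ℕ) (z : ℝ) : ℝ≥0∞ :=
  volume (Prod.mk z ⁻¹' G a b l N)

variable (a b l : ℕ → ℝ)

lemma measurableSet_bad (i : ℕ) : MeasurableSet (bad a b l i) :=
  (measurableSet_Icc.prod measurableSet_Icc).union (measurableSet_Icc.prod measurableSet_Icc)

lemma measurableSet_G (N : Set ℕ) : MeasurableSet (G a b l N) := by
  refine MeasurableSet.inter (measurable_snd measurableSet_Icc) ?_
  exact MeasurableSet.biInter (Set.to_countable N) fun i _ => (measurableSet_bad a b l i).compl

lemma measurable_alf (N : Set ℕ) : Measurable (alf a b l N) :=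
  measurable_measure_prodMk_left (measurableSet_G a b l N)

lemma alf_le_one (N : Set ℕ) (z : ℝ) : alf a b l N z ≤ 1 := by
  have h : Prod.mk z ⁻¹' G a b l N ⊆ Set.Icc (0:ℝ) 1 := fun w hw => hw.1
  calc volume (Prod.mk z ⁻¹' G a b l N) ≤ volume (Set.Icc (0:ℝ) 1) := measure_mono h
    _ = 1 := by simp [Real.volume_Icc]

lemma alf_ne_top (N : Set ℕ) (z : ℝ) : alf a b l N z ≠ ⊤ :=
  ((alf_le_one a b l N z).trans_lt one_lt_top).ne

lemma alf_anti {N N' : Set ℕ} (h : N ⊆ N') (z : ℝ) : alf a b l N' z ≤ alf a b l N z := by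
  apply measure_mono
  apply Set.preimage_mono
  refine Set.inter_subset_inter le_rfl ?_
  exact Set.biInter_subset_biInter_left h

/-- survivor set for a sign pattern χ -/
def Zs (a b l : ℕ → ℝ) (n : ℕ) (χ : Fin n → Bool) : Set ℝ :=
  ⋂ i : Fin n, (cond (χ i) (Jv b l ↑i)ᶜ (Iv a l ↑i)ᶜ)

lemma measurableSet_Jv (i : ℕ) : MeasurableSet (Jv b l i) := measurableSet_Icc
lemma measurableSet_Iv (i : ℕ) : MeasurableSet (Iv a l i) := measurableSet_Icc

lemma measurableSet_Zs (n : ℕ) (χ : Fin n → Bool) : MeasurableSet (Zs a b l n χ) := by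
  refine MeasurableSet.iInter fun i => ?_
  cases χ i
  · exact (measurableSet_Iv a l ↑i).compl
  · exact (measurableSet_Jv b l ↑i).compl

lemma Zs_subset_slice {n : ℕ} {χ : Fin n → Bool} {z : ℝ} (hz : z ∈ Zs a b l n χ) :
    Zs a b l n χ ∩ Set.Icc (0:ℝ) 1 ⊆ Prod.mk z ⁻¹' G a b l (Set.Iio n) := by
  rintro w ⟨hw, hw01⟩
  refine ⟨hw01, ?_⟩
  simp only [Set.mem_iInter, Set.mem_compl_iff]
  intro i hi
  rw [Set.mem_Iio] at hi
  intro hbad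
  have hzi := Set.mem_iInter.1 hz ⟨i, hi⟩
  have hwi := Set.mem_iInter.1 hw ⟨i, hi⟩
  rcases hbad with h1 | h2
  · -- z ∈ Iv i, w ∈ Jv i
    cases hχ : χ ⟨i, hi⟩ <;> rw [hχ] at hzi hwi <;> simp only [Bool.cond_false, Bool.cond_true] at hzi hwi
    · exact hzi h1.1
    · exact hwi h1.2
  · -- z ∈ Jv i, w ∈ Iv i
    cases hχ : χ ⟨i, hi⟩ <;> rw [hχ] at hzi hwi <;> simp only [Bool.cond_false, Bool.cond_true] at hzi hwi
    · exact hwi h2.2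
    · exact hzi h2.1

/-- weight (1/2)^(number of memberships) as a product -/
def Fn (a b l : ℕ → ℝ) (n : ℕ) (z : ℝ) : ℝ≥0∞ :=
  ∏ i : Fin n, (if z ∈ Jv b l ↑i ∪ Iv a l ↑i then (2:ℝ≥0∞)⁻¹ else 1)

lemma measurable_Fn (n : ℕ) : Measurable (Fn a b l n) := by
  refine Finset.measurable_prod _ fun i _ => ?_
  exact Measurable.ite ((measurableSet_Jv b l ↑i).union (measurableSet_Iv a l ↑i)) measurable_const measurable_const

/-- counting: 2^n * Fn ≤ number of survivor patterns containing z -/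
lemma counting (n : ℕ) {z : ℝ} (hz : ∀ i : Fin n, ¬(z ∈ Jv b l ↑i ∧ z ∈ Iv a l ↑i)) :
    (2:ℝ≥0∞) ^ n * Fn a b l n z ≤ ∑ χ : Fin n → Bool, (Zs a b l n χ).indicator 1 z := by
  classical
  have key : ∀ χ : Fin n → Bool, (Zs a b l n χ).indicator (1 : ℝ → ℝ≥0∞) z
      = ∏ i : Fin n, ((cond (χ i) (Jv b l ↑i)ᶜ (Iv a l ↑i)ᶜ).indicator 1 z) := by
    intro χ
    by_cases h : z ∈ Zs a b l n χ
    · rw [Set.indicator_of_mem h]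
      rw [Finset.prod_congr rfl fun i _ => Set.indicator_of_mem (Set.mem_iInter.1 h i) 1]
      simp
    · rw [Set.indicator_of_notMem h]
      obtain ⟨i, hi⟩ := not_forall.1 (fun hall => h (Set.mem_iInter.2 hall))
      exact (Finset.prod_eq_zero (Finset.mem_univ i) (Set.indicator_of_notMem hi 1)).symm
  calc (2:ℝ≥0∞) ^ n * Fn a b l n z
      = ∏ i : Fin n, (2 * (if z ∈ Jv b l ↑i ∪ Iv a l ↑i then (2:ℝ≥0∞)⁻¹ else 1)) := by
        simp only [Fn]
        rw [Finset.prod_mul_distrib, Finset.prod_const, Finset.card_univ, Fintype.card_fin]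
    _ ≤ ∏ i : Fin n, (((Jv b l ↑i)ᶜ.indicator 1 z) + ((Iv a l ↑i)ᶜ.indicator 1 z)) := by
        refine Finset.prod_le_prod' fun i _ => ?_
        by_cases hJ : z ∈ Jv b l ↑i <;> by_cases hI : z ∈ Iv a l ↑i
        · exact absurd ⟨hJ, hI⟩ (hz i)
        · simp [hJ, hI, Set.indicator_of_notMem, Set.indicator_of_mem,
            ENNReal.mul_inv_cancel (two_ne_zero) (ofNat_ne_top)]
        · simp [hJ, hI, Set.indicator_of_notMem, Set.indicator_of_mem,
            ENNReal.mul_inv_cancel (two_ne_zero) (ofNat_ne_top)]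
        · simp [hJ, hI]; norm_num
    _ = ∑ χ : Fin n → Bool, ∏ i : Fin n, ((cond (χ i) (Jv b l ↑i)ᶜ (Iv a l ↑i)ᶜ).indicator 1 z) := by
        rw [← Fintype.prod_sum (fun (i : Fin n) (b' : Bool) =>
          ((cond b' (Jv b l ↑i)ᶜ (Iv a l ↑i)ᶜ).indicator (1 : ℝ → ℝ≥0∞) z))]
        refine Finset.prod_congr rfl fun i _ => ?_
        rw [Fintype.sum_bool]
        simp
    _ = ∑ χ : Fin n → Bool, (Zs a b l n χ).indicator 1 z := by
        exact Finset.sum_congr rfl fun χ _ => (key χ).symm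

lemma perchi_le_one (n : ℕ) (χ : Fin n → Bool) :
    ∫⁻ z in Zs a b l n χ ∩ Set.Icc (0:ℝ) 1, (alf a b l (Set.Iio n) z)⁻¹ ≤ 1 := by
  set S := Zs a b l n χ ∩ Set.Icc (0:ℝ) 1 with hS
  have hSm : MeasurableSet S := (measurableSet_Zs a b l n χ).inter measurableSet_Icc
  have hlow : ∀ z ∈ S, volume S ≤ alf a b l (Set.Iio n) z := by
    intro z hzS
    exact measure_mono (Zs_subset_slice a b l hzS.1)
  calc ∫⁻ z in S, (alf a b l (Set.Iio n) z)⁻¹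
      ≤ ∫⁻ _ in S, (volume S)⁻¹ := by
        refine setLIntegral_mono measurable_const fun z hz => ?_
        exact ENNReal.inv_le_inv' (hlow z hz)
    _ = (volume S)⁻¹ * volume S := setLIntegral_const S _
    _ ≤ 1 := by
        rcases eq_or_ne (volume S) 0 with h0 | h0
        · simp [h0]
        · have hfin : volume S ≠ ⊤ := by
            refine ne_of_lt (lt_of_le_of_lt (measure_mono Set.inter_subset_right) ?_)
            simp [Real.volume_Icc]
          rw [ENNReal.inv_mul_cancel h0 hfin]

lemma badpts_null (hba : ∀ i, b i + l i ≤ a i) (n : ℕ) :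
    volume (⋃ i : Fin n, (Jv b l ↑i ∩ Iv a l ↑i)) = 0 := by
  refine measure_iUnion_null fun i => ?_
  have hsub : Jv b l ↑i ∩ Iv a l ↑i ⊆ {a ↑i} := by
    rintro x ⟨hxJ, hxI⟩
    have h1 : x ≤ b ↑i + l ↑i := hxJ.2
    have h2 : a ↑i ≤ x := hxI.1
    have : x = a ↑i := le_antisymm (h1.trans (hba ↑i)) h2
    simp [this]
  exact measure_mono_null hsub (measure_singleton _)

lemma FoverAlf (hba : ∀ i, b i + l i ≤ a i) (n : ℕ) :
    ∫⁻ z in Set.Icc (0:ℝ) 1, Fn a b l n z * (alf a b l (Set.Iio n) z)⁻¹ ≤ 1 := by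
  classical
  have hZm : ∀ χ : Fin n → Bool, MeasurableSet (Zs a b l n χ) := measurableSet_Zs a b l n
  have halfm : Measurable (alf a b l (Set.Iio n)) := measurable_alf a b l _
  have hnull : (volume.restrict (Set.Icc (0:ℝ) 1)) (⋃ i : Fin n, (Jv b l ↑i ∩ Iv a l ↑i)) = 0 :=
    le_antisymm (le_trans (Measure.restrict_le_self _) (le_of_eq (badpts_null a b l hba n)))
      zero_le
  have hae : ∀ᵐ z ∂(volume.restrict (Set.Icc (0:ℝ) 1)),
      Fn a b l n z * (alf a b l (Set.Iio n) z)⁻¹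
      ≤ (2:ℝ≥0∞)⁻¹ ^ n * ∑ χ : Fin n → Bool,
          (Zs a b l n χ).indicator (fun w => (alf a b l (Set.Iio n) w)⁻¹) z := by
    refine Filter.eventually_of_mem (compl_mem_ae_iff.2 hnull) fun z hz => ?_
    have hz' : ∀ i : Fin n, ¬(z ∈ Jv b l ↑i ∧ z ∈ Iv a l ↑i) := by
      intro i hi
      exact hz (Set.mem_iUnion.2 ⟨i, ⟨hi.1, hi.2⟩⟩)
    have hcount := counting a b l n hz'
    have h1 : Fn a b l n z = (2:ℝ≥0∞)⁻¹ ^ n * ((2:ℝ≥0∞) ^ n * Fn a b l n z) := by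
      rw [← mul_assoc, ← mul_pow, ENNReal.inv_mul_cancel two_ne_zero ofNat_ne_top, one_pow, one_mul]
    calc Fn a b l n z * (alf a b l (Set.Iio n) z)⁻¹
        = (2:ℝ≥0∞)⁻¹ ^ n * (((2:ℝ≥0∞) ^ n * Fn a b l n z) * (alf a b l (Set.Iio n) z)⁻¹) := by
          rw [← mul_assoc, ← h1]
      _ ≤ (2:ℝ≥0∞)⁻¹ ^ n * ((∑ χ : Fin n → Bool, (Zs a b l n χ).indicator 1 z)
            * (alf a b l (Set.Iio n) z)⁻¹) := by
          gcongr
      _ = (2:ℝ≥0∞)⁻¹ ^ n * ∑ χ : Fin n → Bool,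
            (Zs a b l n χ).indicator (fun w => (alf a b l (Set.Iio n) w)⁻¹) z := by
          rw [Finset.sum_mul]
          congr 1
          refine Finset.sum_congr rfl fun χ _ => ?_
          by_cases hzZ : z ∈ Zs a b l n χ
          · simp [Set.indicator_of_mem hzZ]
          · simp [Set.indicator_of_notMem hzZ]
  calc ∫⁻ z in Set.Icc (0:ℝ) 1, Fn a b l n z * (alf a b l (Set.Iio n) z)⁻¹
      ≤ ∫⁻ z in Set.Icc (0:ℝ) 1, (2:ℝ≥0∞)⁻¹ ^ n * ∑ χ : Fin n → Bool,
          (Zs a b l n χ).indicator (fun w => (alf a b l (Set.Iio n) w)⁻¹) z :=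
        lintegral_mono_ae hae
    _ = (2:ℝ≥0∞)⁻¹ ^ n * ∑ χ : Fin n → Bool, ∫⁻ z in Set.Icc (0:ℝ) 1,
          (Zs a b l n χ).indicator (fun w => (alf a b l (Set.Iio n) w)⁻¹) z := by
        rw [lintegral_const_mul]
        · rw [lintegral_finset_sum]
          intro χ _
          exact (halfm.inv).indicator (hZm χ)
        · exact Finset.measurable_sum _ fun χ _ => (halfm.inv).indicator (hZm χ)
    _ ≤ (2:ℝ≥0∞)⁻¹ ^ n * ∑ _χ : Fin n → Bool, 1 := by
        gcongr with χ
        rw [lintegral_indicator (hZm χ), Measure.restrict_restrict (hZm χ)]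
        exact perchi_le_one a b l n χ
    _ = 1 := by
        rw [Finset.sum_const, Finset.card_univ]
        simp only [Fintype.card_fun, Fintype.card_bool, Fintype.card_fin, nsmul_eq_mul, mul_one]
        rw [← ENNReal.inv_pow]
        have h2 : ((2^n : ℕ) : ℝ≥0∞) = (2:ℝ≥0∞)^n := by push_cast; ring
        rw [h2, ENNReal.inv_mul_cancel (pow_ne_zero n two_ne_zero) (ENNReal.pow_ne_top ofNat_ne_top)]

/-- membership count -/
def Dn (a b l : ℕ → ℝ) (n : ℕ) (z : ℝ) : ℕ :=
  ∑ i : Fin n, if z ∈ Jv b l ↑i ∪ Iv a l ↑i then 1 else 0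

lemma Fn_eq_pow (n : ℕ) (z : ℝ) : Fn a b l n z = (2:ℝ≥0∞)⁻¹ ^ (Dn a b l n z) := by
  classical
  rw [Dn, ← Finset.prod_pow_eq_pow_sum]
  refine Finset.prod_congr rfl fun i _ => ?_
  by_cases h : z ∈ Jv b l ↑i ∪ Iv a l ↑i <;> simp [Fn, h]

lemma log_point (αr : ℝ) (hα : 0 < αr) (D : ℕ) :
    Real.log (1/αr) + 1 ≤ (2⁻¹:ℝ)^D / αr + D * Real.log 2 := by
  have hF : (0:ℝ) < (2⁻¹:ℝ)^D := by positivity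
  have h := Real.log_le_sub_one_of_pos (show (0:ℝ) < (2⁻¹:ℝ)^D / αr by positivity)
  have hlog : Real.log ((2⁻¹:ℝ)^D / αr) = -(D*Real.log 2) + Real.log (1/αr) := by
    rw [Real.log_div (ne_of_gt hF) (ne_of_gt hα), Real.log_pow, Real.log_inv,
      Real.log_div one_ne_zero (ne_of_gt hα), Real.log_one]
    push_cast
    ring
  linarith

lemma alf_pos (hba : ∀ i, b i + l i ≤ a i) (n : ℕ) :
    ∀ᵐ z ∂(volume.restrict (Set.Icc (0:ℝ) 1)), 0 < alf a b l (Set.Iio n) z := by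
  classical
  set E : Set ℝ := {0, 1} ∪ ⋃ i : Fin n, ({a ↑i} ∪ {b ↑i + l ↑i}) with hE
  have hEc : E.Countable := by
    refine Set.Countable.union (by simp) ?_
    exact Set.countable_iUnion fun i => Set.Countable.union (Set.countable_singleton _)
      (Set.countable_singleton _)
  have hEnull : (volume.restrict (Set.Icc (0:ℝ) 1)) E = 0 :=
    le_antisymm (le_trans (Measure.restrict_le_self _) (le_of_eq (hEc.measure_zero volume))) zero_le
  have h1 : ∀ᵐ z ∂(volume.restrict (Set.Icc (0:ℝ) 1)), z ∉ E :=
    compl_mem_ae_iff.2 hEnull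
  have h2 : ∀ᵐ z ∂(volume.restrict (Set.Icc (0:ℝ) 1)), z ∈ Set.Icc (0:ℝ) 1 :=
    ae_restrict_mem measurableSet_Icc
  filter_upwards [h1, h2] with z hzE hz01
  -- z is in the open interval
  have hz0 : 0 < z := by
    rcases lt_or_eq_of_le hz01.1 with h | h
    · exact h
    · exact absurd (h ▸ (by simp [hE] : (0:ℝ) ∈ E)) hzE
  have hz1 : z < 1 := by
    rcases lt_or_eq_of_le hz01.2 with h | h
    · exact h
    · exact absurd (by simp [hE, h] : z ∈ E) hzE
  -- for each i the set of w separated from z by square i is closed and avoids z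
  have key : ∀ i : Fin n, IsClosed {w : ℝ | (z, w) ∈ bad a b l ↑i} ∧
      z ∉ {w : ℝ | (z, w) ∈ bad a b l ↑i} := by
    intro i
    constructor
    · by_cases h1' : z ∈ Iv a l ↑i <;> by_cases h2' : z ∈ Jv b l ↑i
      · have : {w : ℝ | (z, w) ∈ bad a b l ↑i} = Jv b l ↑i ∪ Iv a l ↑i := by
          ext w; simp [bad, Set.mem_prod, h1', h2', or_comm]
        rw [this]; exact (isClosed_Icc.union isClosed_Icc)
      · have : {w : ℝ | (z, w) ∈ bad a b l ↑i} = Jv b l ↑i := by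
          ext w; simp [bad, Set.mem_prod, h1', h2']
        rw [this]; exact isClosed_Icc
      · have : {w : ℝ | (z, w) ∈ bad a b l ↑i} = Iv a l ↑i := by
          ext w; simp [bad, Set.mem_prod, h1', h2']
        rw [this]; exact isClosed_Icc
      · have : {w : ℝ | (z, w) ∈ bad a b l ↑i} = ∅ := by
          ext w; simp [bad, Set.mem_prod, h1', h2']
        rw [this]; exact isClosed_empty
    · intro hzz
      have hz' : z ∈ Jv b l ↑i ∧ z ∈ Iv a l ↑i := by
        rcases hzz with h | h
        · exact ⟨h.2, h.1⟩
        · exact ⟨h.1, h.2⟩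
      have : z = a ↑i := le_antisymm (hz'.1.2.trans (hba ↑i)) hz'.2.1
      exact hzE (Set.mem_union_right _ (Set.mem_iUnion.2 ⟨i, Set.mem_union_left _ (by simp [this])⟩))
  set V : Set ℝ := Set.Ioo 0 1 ∩ ⋂ i : Fin n, {w : ℝ | (z, w) ∈ bad a b l ↑i}ᶜ with hV
  have hVopen : IsOpen V := by
    refine isOpen_Ioo.inter (isOpen_iInter_of_finite fun i => ?_)
    exact (key i).1.isOpen_compl
  have hzV : z ∈ V := by
    refine ⟨⟨hz0, hz1⟩, Set.mem_iInter.2 fun i => (key i).2⟩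
  have hVsub : V ⊆ Prod.mk z ⁻¹' G a b l (Set.Iio n) := by
    rintro w ⟨hw01, hwB⟩
    refine ⟨⟨le_of_lt hw01.1, le_of_lt hw01.2⟩, ?_⟩
    simp only [Set.mem_iInter, Set.mem_compl_iff]
    intro i hi
    exact Set.mem_iInter.1 hwB ⟨i, hi⟩
  calc (0:ℝ≥0∞) < volume V := hVopen.measure_pos volume ⟨z, hzV⟩
    _ ≤ alf a b l (Set.Iio n) z := measure_mono hVsub

lemma nu_univ : (volume.restrict (Set.Icc (0:ℝ) 1)) Set.univ = 1 := by
  rw [Measure.restrict_apply_univ]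
  simp [Real.volume_Icc]

lemma measurable_g (n : ℕ) :
    Measurable (fun z => ENNReal.ofReal (Real.log (1 / (alf a b l (Set.Iio n) z).toReal))) := by
  apply ENNReal.measurable_ofReal.comp
  apply Real.measurable_log.comp
  exact (measurable_const.div (measurable_alf a b l _).ennreal_toReal)

lemma measurable_Dcast (n : ℕ) :
    Measurable (fun z => ((Dn a b l n z : ℝ≥0∞))) := by
  have h : (fun z => ((Dn a b l n z : ℝ≥0∞)))
      = fun z => ∑ i : Fin n, (if z ∈ Jv b l ↑i ∪ Iv a l ↑i then (1:ℝ≥0∞) else 0) := by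
    funext z
    rw [Dn]
    push_cast
    refine Finset.sum_congr rfl fun i _ => ?_
    by_cases h : z ∈ Jv b l ↑i ∪ Iv a l ↑i <;> simp [h]
  rw [h]
  exact Finset.measurable_sum _ fun i _ => Measurable.ite
    ((measurableSet_Jv b l ↑i).union (measurableSet_Iv a l ↑i)) measurable_const measurable_const

lemma core (hl : ∀ i, 0 ≤ l i) (hba : ∀ i, b i + l i ≤ a i) (n : ℕ) :
    ∫⁻ z in Set.Icc (0:ℝ) 1,
        ENNReal.ofReal (Real.log (1 / (alf a b l (Set.Iio n) z).toReal))
      ≤ (∑ i : Fin n, ENNReal.ofReal (2 * l ↑i)) * ENNReal.ofReal (Real.log 2) := by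
  classical
  have halfm : Measurable (alf a b l (Set.Iio n)) := measurable_alf a b l _
  have hgm := measurable_g a b l n
  have hDm : Measurable (fun z => ((Dn a b l n z : ℝ≥0∞))) := measurable_Dcast a b l n
  have hFm : Measurable (fun z => Fn a b l n z * (alf a b l (Set.Iio n) z)⁻¹) :=
    (measurable_Fn a b l n).mul halfm.inv
  -- pointwise bound
  have hpt : ∀ᵐ z ∂(volume.restrict (Set.Icc (0:ℝ) 1)),
      ENNReal.ofReal (Real.log (1 / (alf a b l (Set.Iio n) z).toReal)) + 1
        ≤ Fn a b l n z * (alf a b l (Set.Iio n) z)⁻¹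
          + (Dn a b l n z : ℝ≥0∞) * ENNReal.ofReal (Real.log 2) := by
    filter_upwards [alf_pos a b l hba n] with z hzpos
    have hαtop : alf a b l (Set.Iio n) z ≠ ⊤ := alf_ne_top a b l _ z
    have hαrpos : 0 < (alf a b l (Set.Iio n) z).toReal :=
      ENNReal.toReal_pos (ne_of_gt hzpos) hαtop
    have hαr1 : (alf a b l (Set.Iio n) z).toReal ≤ 1 := by
      calc (alf a b l (Set.Iio n) z).toReal ≤ (1:ℝ≥0∞).toReal :=
            ENNReal.toReal_mono one_ne_top (alf_le_one a b l _ z)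
        _ = 1 := by simp
    have hreal := log_point ((alf a b l (Set.Iio n) z).toReal) hαrpos (Dn a b l n z)
    have hlognn : 0 ≤ Real.log (1/(alf a b l (Set.Iio n) z).toReal) :=
      Real.log_nonneg (one_le_one_div hαrpos hαr1)
    calc ENNReal.ofReal (Real.log (1/(alf a b l (Set.Iio n) z).toReal)) + 1
        = ENNReal.ofReal (Real.log (1/(alf a b l (Set.Iio n) z).toReal) + 1) := by
          rw [ENNReal.ofReal_add hlognn zero_le_one, ENNReal.ofReal_one]
      _ ≤ ENNReal.ofReal ((2⁻¹:ℝ)^(Dn a b l n z) / (alf a b l (Set.Iio n) z).toReal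
            + (Dn a b l n z) * Real.log 2) := ENNReal.ofReal_le_ofReal hreal
      _ ≤ ENNReal.ofReal ((2⁻¹:ℝ)^(Dn a b l n z) / (alf a b l (Set.Iio n) z).toReal)
            + ENNReal.ofReal ((Dn a b l n z) * Real.log 2) := ENNReal.ofReal_add_le
      _ = Fn a b l n z * (alf a b l (Set.Iio n) z)⁻¹
            + (Dn a b l n z : ℝ≥0∞) * ENNReal.ofReal (Real.log 2) := by
          congr 1
          · rw [ENNReal.ofReal_div_of_pos hαrpos, ENNReal.ofReal_pow (by norm_num),
              ENNReal.ofReal_inv_of_pos (by norm_num), ENNReal.ofReal_ofNat,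
              ENNReal.ofReal_toReal hαtop, div_eq_mul_inv, Fn_eq_pow]
          · rw [ENNReal.ofReal_mul (by positivity), ENNReal.ofReal_natCast]
  -- integrate
  have hint := lintegral_mono_ae hpt
  rw [lintegral_add_right _ measurable_const, lintegral_const, nu_univ, mul_one] at hint
  rw [lintegral_add_left hFm, lintegral_mul_const _ hDm] at hint
  have hFa : ∫⁻ z in Set.Icc (0:ℝ) 1, Fn a b l n z * (alf a b l (Set.Iio n) z)⁻¹ ≤ 1 :=
    FoverAlf a b l hba n
  have hDint : ∫⁻ z in Set.Icc (0:ℝ) 1, ((Dn a b l n z : ℝ≥0∞))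
      ≤ ∑ i : Fin n, ENNReal.ofReal (2 * l ↑i) := by
    have hrw : ∀ z : ℝ, ((Dn a b l n z : ℝ≥0∞))
        = ∑ i : Fin n, (Jv b l ↑i ∪ Iv a l ↑i).indicator (fun _ => (1:ℝ≥0∞)) z := by
      intro z
      rw [Dn]
      push_cast
      refine Finset.sum_congr rfl fun i _ => ?_
      by_cases h : z ∈ Jv b l ↑i ∪ Iv a l ↑i <;> simp [h, Set.indicator_apply]
    calc ∫⁻ z in Set.Icc (0:ℝ) 1, ((Dn a b l n z : ℝ≥0∞))
        = ∑ i : Fin n, ∫⁻ z in Set.Icc (0:ℝ) 1,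
            (Jv b l ↑i ∪ Iv a l ↑i).indicator (fun _ => (1:ℝ≥0∞)) z := by
          rw [lintegral_congr hrw, lintegral_finset_sum]
          intro i _
          exact measurable_const.indicator
            ((measurableSet_Jv b l ↑i).union (measurableSet_Iv a l ↑i))
      _ ≤ ∑ i : Fin n, ENNReal.ofReal (2 * l ↑i) := by
          refine Finset.sum_le_sum fun i _ => ?_
          rw [lintegral_indicator ((measurableSet_Jv b l ↑i).union (measurableSet_Iv a l ↑i)),
            setLIntegral_const, one_mul]
          calc (volume.restrict (Set.Icc (0:ℝ) 1)) (Jv b l ↑i ∪ Iv a l ↑i)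
              ≤ volume (Jv b l ↑i ∪ Iv a l ↑i) := Measure.restrict_le_self _
            _ ≤ volume (Jv b l ↑i) + volume (Iv a l ↑i) := measure_union_le _ _
            _ = ENNReal.ofReal (2 * l ↑i) := by
                rw [Jv, Iv, Real.volume_Icc, Real.volume_Icc, add_sub_cancel_left,
                  add_sub_cancel_left, ← ENNReal.ofReal_add (hl ↑i) (hl ↑i)]
                congr 1
                ring
  have hfinal : (∫⁻ z in Set.Icc (0:ℝ) 1,
        ENNReal.ofReal (Real.log (1 / (alf a b l (Set.Iio n) z).toReal))) + 1
      ≤ (∑ i : Fin n, ENNReal.ofReal (2 * l ↑i)) * ENNReal.ofReal (Real.log 2) + 1 := by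
    refine hint.trans ?_
    rw [add_comm _ (1:ℝ≥0∞)]
    gcongr
  exact (ENNReal.add_le_add_iff_right one_ne_top).1 hfinal

lemma tangent {f : ℝ → ℝ≥0∞} (hf : Measurable f) (hf1 : ∀ z, f z ≤ 1)
    (hpos : ∀ᵐ z ∂(volume.restrict (Set.Icc (0:ℝ) 1)), 0 < f z) :
    ENNReal.ofReal (Real.log (1 / (∫⁻ z in Set.Icc (0:ℝ) 1, f z).toReal))
      ≤ ∫⁻ z in Set.Icc (0:ℝ) 1, ENNReal.ofReal (Real.log (1 / (f z).toReal)) := by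
  classical
  set c := ∫⁻ z in Set.Icc (0:ℝ) 1, f z with hc
  have hc1 : c ≤ 1 := by
    rw [hc]
    calc ∫⁻ z in Set.Icc (0:ℝ) 1, f z ≤ ∫⁻ _ in Set.Icc (0:ℝ) 1, 1 :=
          lintegral_mono fun z => hf1 z
      _ = 1 := by rw [lintegral_const, nu_univ, mul_one]
  have hctop : c ≠ ⊤ := (hc1.trans_lt one_lt_top).ne
  have hcpos : 0 < c := by
    rw [hc, lintegral_pos_iff_support hf]
    by_contra hns
    push_neg at hns
    have hsup0 : (volume.restrict (Set.Icc (0:ℝ) 1)) (Function.support f) = 0 :=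
      le_antisymm hns zero_le
    have hz0 : ∀ᵐ z ∂(volume.restrict (Set.Icc (0:ℝ) 1)), f z = 0 := by
      refine Filter.eventually_of_mem (compl_mem_ae_iff.2 hsup0) fun z hz => ?_
      simpa [Function.mem_support, not_not] using hz
    have : ∀ᵐ _z ∂(volume.restrict (Set.Icc (0:ℝ) 1)), False := by
      filter_upwards [hz0, hpos] with z h1 h2
      exact absurd h1 (ne_of_gt h2)

    have huniv := ae_iff.1 this
    simp only [not_false_iff] at huniv
    rw [Set.setOf_true, nu_univ] at huniv
    exact one_ne_zero huniv
  have hcrpos : 0 < c.toReal := ENNReal.toReal_pos (ne_of_gt hcpos) hctop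
  have hcr1 : c.toReal ≤ 1 := by
    calc c.toReal ≤ (1:ℝ≥0∞).toReal := ENNReal.toReal_mono one_ne_top hc1
      _ = 1 := by simp
  have hpt : ∀ᵐ z ∂(volume.restrict (Set.Icc (0:ℝ) 1)),
      ENNReal.ofReal (Real.log (1 / c.toReal)) + 1
        ≤ ENNReal.ofReal (Real.log (1 / (f z).toReal)) + f z * c⁻¹ := by
    filter_upwards [hpos] with z hfz
    have hftop : f z ≠ ⊤ := ((hf1 z).trans_lt one_lt_top).ne
    have hfrpos : 0 < (f z).toReal := ENNReal.toReal_pos (ne_of_gt hfz) hftop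
    have hreal : Real.log (1 / c.toReal) + 1
        ≤ Real.log (1 / (f z).toReal) + (f z).toReal / c.toReal := by
      have h := Real.log_le_sub_one_of_pos
        (show (0:ℝ) < (f z).toReal / c.toReal by positivity)
      have hlog : Real.log ((f z).toReal / c.toReal)
          = Real.log ((f z).toReal) - Real.log (c.toReal) :=
        Real.log_div (ne_of_gt hfrpos) (ne_of_gt hcrpos)
      have l1 : Real.log (1 / c.toReal) = - Real.log (c.toReal) := by
        rw [one_div, Real.log_inv]
      have l2 : Real.log (1 / (f z).toReal) = - Real.log ((f z).toReal) := by
        rw [one_div, Real.log_inv]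
      rw [l1, l2]
      linarith
    have hlognnc : 0 ≤ Real.log (1 / c.toReal) :=
      Real.log_nonneg (one_le_one_div hcrpos hcr1)
    calc ENNReal.ofReal (Real.log (1 / c.toReal)) + 1
        = ENNReal.ofReal (Real.log (1 / c.toReal) + 1) := by
          rw [ENNReal.ofReal_add hlognnc zero_le_one, ENNReal.ofReal_one]
      _ ≤ ENNReal.ofReal (Real.log (1 / (f z).toReal) + (f z).toReal / c.toReal) :=
          ENNReal.ofReal_le_ofReal hreal
      _ ≤ ENNReal.ofReal (Real.log (1 / (f z).toReal))
            + ENNReal.ofReal ((f z).toReal / c.toReal) := ENNReal.ofReal_add_le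
      _ = ENNReal.ofReal (Real.log (1 / (f z).toReal)) + f z * c⁻¹ := by
          rw [ENNReal.ofReal_div_of_pos hcrpos, ENNReal.ofReal_toReal hftop,
            ENNReal.ofReal_toReal hctop, div_eq_mul_inv]
          rfl
  have hgm : Measurable (fun z => ENNReal.ofReal (Real.log (1 / (f z).toReal))) := by
    apply ENNReal.measurable_ofReal.comp
    apply Real.measurable_log.comp
    exact measurable_const.div hf.ennreal_toReal
  have hint := lintegral_mono_ae hpt
  rw [lintegral_const, nu_univ, mul_one] at hint
  rw [lintegral_add_left hgm, lintegral_mul_const _ hf, ← hc,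
    ENNReal.mul_inv_cancel (ne_of_gt hcpos) hctop] at hint
  exact (ENNReal.add_le_add_iff_right one_ne_top).1 hint

lemma cn_pos (hba : ∀ i, b i + l i ≤ a i) (n : ℕ) :
    0 < ∫⁻ z in Set.Icc (0:ℝ) 1, alf a b l (Set.Iio n) z := by
  rw [lintegral_pos_iff_support (measurable_alf a b l _)]
  by_contra hns
  push_neg at hns
  have hsup0 : (volume.restrict (Set.Icc (0:ℝ) 1)) (Function.support (alf a b l (Set.Iio n))) = 0 :=
    le_antisymm hns zero_le
  have hz0 : ∀ᵐ z ∂(volume.restrict (Set.Icc (0:ℝ) 1)), alf a b l (Set.Iio n) z = 0 := by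
    refine Filter.eventually_of_mem (compl_mem_ae_iff.2 hsup0) fun z hz => ?_
    simpa [Function.mem_support, not_not] using hz
  have hFalse : ∀ᵐ _z ∂(volume.restrict (Set.Icc (0:ℝ) 1)), False := by
    filter_upwards [hz0, alf_pos a b l hba n] with z h1 h2
    exact absurd h1 (ne_of_gt h2)
  have huniv := ae_iff.1 hFalse
  simp only [not_false_iff] at huniv
  rw [Set.setOf_true, nu_univ] at huniv
  exact one_ne_zero huniv

lemma cn_le_one (n : Set ℕ) : ∫⁻ z in Set.Icc (0:ℝ) 1, alf a b l n z ≤ 1 := by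
  calc ∫⁻ z in Set.Icc (0:ℝ) 1, alf a b l n z ≤ ∫⁻ _ in Set.Icc (0:ℝ) 1, 1 :=
        lintegral_mono fun z => alf_le_one a b l n z
    _ = 1 := by rw [lintegral_const, nu_univ, mul_one]

lemma G_univ_eq : G a b l Set.univ = ⋂ n : ℕ, G a b l (Set.Iio n) := by
  apply Set.Subset.antisymm
  · refine Set.subset_iInter fun n => ?_
    rintro q ⟨hq1, hq2⟩
    exact ⟨hq1, Set.biInter_subset_biInter_left (fun i _ => Set.mem_univ i) hq2⟩
  · rintro q hq
    have h0 := Set.mem_iInter.1 hq 0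
    refine ⟨h0.1, ?_⟩
    simp only [Set.mem_iInter, Set.mem_compl_iff]
    intro i _
    have hi := Set.mem_iInter.1 hq (i+1)
    have := hi.2
    simp only [Set.mem_iInter, Set.mem_compl_iff] at this
    exact this i (Nat.lt_succ_self i)

lemma alf_iInf (z : ℝ) : (⨅ n : ℕ, alf a b l (Set.Iio n) z) = alf a b l Set.univ z := by
  have hset : Prod.mk z ⁻¹' G a b l Set.univ = ⋂ n : ℕ, Prod.mk z ⁻¹' G a b l (Set.Iio n) := by
    rw [G_univ_eq, Set.preimage_iInter]
  have hmono : Antitone (fun n : ℕ => Prod.mk z ⁻¹' G a b l (Set.Iio n)) := by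
    intro n m hnm
    apply Set.preimage_mono
    exact Set.inter_subset_inter le_rfl
      (Set.biInter_subset_biInter_left fun i (hi : i < n) => lt_of_lt_of_le hi hnm)
  have hmeas : ∀ n : ℕ, NullMeasurableSet (Prod.mk z ⁻¹' G a b l (Set.Iio n)) volume :=
    fun n => ((measurableSet_G a b l (Set.Iio n)).preimage measurable_prodMk_left).nullMeasurableSet
  have hfin : ∃ n : ℕ, volume (Prod.mk z ⁻¹' G a b l (Set.Iio n)) ≠ ⊤ :=
    ⟨0, alf_ne_top a b l (Set.Iio 0) z⟩
  have := Directed.measure_iInter hmeas hmono.directed_ge hfin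
  rw [alf, hset, this]
  rfl

lemma keylog (hl : ∀ i, 0 ≤ l i) (hba : ∀ i, b i + l i ≤ a i) (n : ℕ) :
    ENNReal.ofReal (Real.log (1 / (∫⁻ z in Set.Icc (0:ℝ) 1, alf a b l (Set.Iio n) z).toReal))
      ≤ (∑ i : Fin n, ENNReal.ofReal (2 * l ↑i)) * ENNReal.ofReal (Real.log 2) :=
  (tangent (measurable_alf a b l _) (alf_le_one a b l _) (alf_pos a b l hba n)).trans
    (core a b l hl hba n)

lemma final_real (hl : ∀ i, 0 ≤ l i) (hba : ∀ i, b i + l i ≤ a i) {ε : ℝ} (hε0 : 0 < ε)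
    (hdef : ∫⁻ z in Set.Icc (0:ℝ) 1, alf a b l Set.univ z ≤ ENNReal.ofReal ε)
    {σ : ℝ} (hσnn : 0 ≤ σ)
    (hσ : ∀ n : ℕ, (∑ i : Fin n, ENNReal.ofReal (2 * l ↑i)) * ENNReal.ofReal (Real.log 2)
      ≤ ENNReal.ofReal σ) :
    Real.log (1/ε) ≤ σ := by
  -- for every δ > ε there is n with cn < ofReal δ
  have hiInf : (⨅ n : ℕ, ∫⁻ z in Set.Icc (0:ℝ) 1, alf a b l (Set.Iio n) z)
      = ∫⁻ z in Set.Icc (0:ℝ) 1, alf a b l Set.univ z := by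
    rw [← lintegral_iInf (fun n => measurable_alf a b l _) ?anti ?fin]
    · exact lintegral_congr fun z => alf_iInf a b l z
    case anti =>
      intro n m hnm z
      exact alf_anti a b l (fun i (hi : i < n) => lt_of_lt_of_le hi hnm) z
    case fin =>
      exact ((cn_le_one a b l _).trans_lt one_lt_top).ne
  have hkey : ∀ δ : ℝ, ε < δ → Real.log (1/δ) ≤ σ := by
    intro δ hδ
    have hlt : (⨅ n : ℕ, ∫⁻ z in Set.Icc (0:ℝ) 1, alf a b l (Set.Iio n) z)
        < ENNReal.ofReal δ := by
      rw [hiInf]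
      exact lt_of_le_of_lt hdef (ENNReal.ofReal_lt_ofReal_iff (lt_trans hε0 hδ) |>.2 hδ)
    obtain ⟨n, hn⟩ := iInf_lt_iff.1 hlt
    set cn := ∫⁻ z in Set.Icc (0:ℝ) 1, alf a b l (Set.Iio n) z with hcn
    have hcntop : cn ≠ ⊤ := ((cn_le_one a b l _).trans_lt one_lt_top).ne
    have hcnrpos : 0 < cn.toReal :=
      ENNReal.toReal_pos (ne_of_gt (cn_pos a b l hba n)) hcntop
    have hcnrlt : cn.toReal < δ := (ENNReal.lt_ofReal_iff_toReal_lt hcntop).1 hn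
    have h1 : Real.log (1/δ) ≤ Real.log (1/cn.toReal) := by
      apply Real.log_le_log (one_div_pos.2 (lt_trans hε0 hδ))
      apply one_div_le_one_div_of_le hcnrpos (le_of_lt hcnrlt)
    have h2 : Real.log (1/cn.toReal) ≤ σ := by
      have := (keylog a b l hl hba n).trans (hσ n)
      exact (ENNReal.ofReal_le_ofReal_iff hσnn).1 this
    linarith
  -- limit δ → ε⁺
  have hcont : Filter.Tendsto (fun δ : ℝ => Real.log (1/δ)) (nhdsWithin ε (Set.Ioi ε))
      (nhds (Real.log (1/ε))) := by
    apply Filter.Tendsto.mono_left _ nhdsWithin_le_nhds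
    exact (Real.continuousAt_log (ne_of_gt (one_div_pos.2 hε0))).comp
      (continuousAt_const.div continuousAt_id (ne_of_gt hε0)) |>.tendsto
  refine le_of_tendsto hcont ?_
  exact eventually_nhdsWithin_of_forall fun δ hδ => hkey δ hδ

lemma volume_diag : volume {q : ℝ × ℝ | q.1 = q.2} = 0 := by
  have hm : MeasurableSet {q : ℝ × ℝ | q.1 = q.2} :=
    (isClosed_eq continuous_fst continuous_snd).measurableSet
  rw [MeasureTheory.Measure.volume_eq_prod, Measure.prod_apply hm]
  have : ∀ x : ℝ, volume (Prod.mk x ⁻¹' {q : ℝ × ℝ | q.1 = q.2}) = 0 := by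
    intro x
    have : Prod.mk x ⁻¹' {q : ℝ × ℝ | q.1 = q.2} = {x} := by
      ext y
      simp [eq_comm]
    rw [this]
    exact measure_singleton x
  simp only [this]
  exact lintegral_zero

lemma volume_LT : volume {q : ℝ × ℝ | 0 ≤ q.2 ∧ q.2 < q.1 ∧ q.1 ≤ 1} = ENNReal.ofReal (1/2) := by
  classical
  have hm : MeasurableSet {q : ℝ × ℝ | 0 ≤ q.2 ∧ q.2 < q.1 ∧ q.1 ≤ 1} := by
    refine MeasurableSet.inter ?_ (MeasurableSet.inter ?_ ?_)
    · exact measurable_snd measurableSet_Ici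
    · exact measurableSet_lt measurable_snd measurable_fst
    · exact measurable_fst measurableSet_Iic
  rw [MeasureTheory.Measure.volume_eq_prod, Measure.prod_apply hm]
  have hslice : ∀ x : ℝ, volume (Prod.mk x ⁻¹' {q : ℝ × ℝ | 0 ≤ q.2 ∧ q.2 < q.1 ∧ q.1 ≤ 1})
      = (Set.Iic (1:ℝ)).indicator (fun x => ENNReal.ofReal x) x := by
    intro x
    by_cases hx : x ≤ 1
    · have h1 : Prod.mk x ⁻¹' {q : ℝ × ℝ | 0 ≤ q.2 ∧ q.2 < q.1 ∧ q.1 ≤ 1} = Set.Ico 0 x := by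
        ext y
        simp only [Set.mem_preimage, Set.mem_setOf_eq, Set.mem_Ico]
        exact ⟨fun h => ⟨h.1, h.2.1⟩, fun h => ⟨h.1, h.2, hx⟩⟩
      rw [h1, Real.volume_Ico, Set.indicator_of_mem (by exact hx : x ∈ Set.Iic (1:ℝ))]
      simp
    · have h1 : Prod.mk x ⁻¹' {q : ℝ × ℝ | 0 ≤ q.2 ∧ q.2 < q.1 ∧ q.1 ≤ 1} = ∅ := by
        ext y
        simp only [Set.mem_preimage, Set.mem_setOf_eq, Set.mem_empty_iff_false, iff_false]
        intro h
        exact hx h.2.2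
      rw [h1, Set.indicator_of_notMem (by exact hx : x ∉ Set.Iic (1:ℝ))]
      simp
  rw [lintegral_congr hslice, lintegral_indicator measurableSet_Iic]
  have hsplit : Set.Iic (1:ℝ) = Set.Iio 0 ∪ Set.Icc 0 1 := by
    ext x
    simp only [Set.mem_Iic, Set.mem_union, Set.mem_Iio, Set.mem_Icc]
    constructor
    · intro h
      rcases lt_or_ge x 0 with h0 | h0
      · exact Or.inl h0
      · exact Or.inr ⟨h0, h⟩
    · rintro (h | h)
      · linarith
      · exact h.2
  rw [hsplit, lintegral_union measurableSet_Icc]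
  · have hzero : ∫⁻ x in Set.Iio 0, ENNReal.ofReal x = 0 := by
      have : ∀ᵐ x ∂(volume.restrict (Set.Iio (0:ℝ))), ENNReal.ofReal x = 0 := by
        refine (ae_restrict_iff' measurableSet_Iio).2 (Filter.Eventually.of_forall fun x hx => ?_)
        exact ENNReal.ofReal_eq_zero.2 (le_of_lt hx)
      rw [lintegral_congr_ae this, lintegral_zero]
    rw [hzero, zero_add]
    rw [← MeasureTheory.ofReal_integral_eq_lintegral_ofReal]
    · congr 1
      rw [MeasureTheory.integral_Icc_eq_integral_Ioc,
        ← intervalIntegral.integral_of_le (zero_le_one (α := ℝ))]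
      rw [integral_id]
      norm_num
    · exact (continuous_id.integrableOn_Icc)
    · exact (ae_restrict_iff' measurableSet_Icc).2 (Filter.Eventually.of_forall fun x hx => hx.1)
  · exact Set.disjoint_left.2 fun x hx1 hx2 => absurd hx2.1 (not_le.2 hx1)

end

end TriangleSquares


open TriangleSquares

/- STATEMENT 15 (axis-parallel squares in the triangle `T = {0 ≤ x ≤ 1, 0 ≤ y ≤ x}`).
A countable collection of axis-parallel closed squares is given by corners `p i` and
side lengths `l i ≥ 0`; the square is `Set.Icc (p i) (p i + (l i, l i))`
(`= [p₁, p₁+l] × [p₂, p₂+l]` in `ℝ²`), each contained in `T`.  If the union has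
measure at least `(1−ε)/2` then `∑ l i ≥ (1/2)·log₂(1/ε)`; in particular, if the
squares cover almost all of `T`, the sum of side lengths diverges (is `∞` in `[0,∞]`). -/
theorem triangle_axis_parallel_squares_lower_bound
    (p : ℕ → ℝ × ℝ) (l : ℕ → ℝ) (hl : ∀ i, 0 ≤ l i)
    (hsub : ∀ i, Set.Icc (p i) (p i + (l i, l i)) ⊆
      {q : ℝ × ℝ | 0 ≤ q.1 ∧ q.1 ≤ 1 ∧ 0 ≤ q.2 ∧ q.2 ≤ q.1}) :
    (∀ ε : ℝ, 0 < ε → ε < 1 →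
      ENNReal.ofReal ((1 - ε) / 2) ≤ volume (⋃ i, Set.Icc (p i) (p i + (l i, l i))) →
      ENNReal.ofReal (1 / 2 * Real.logb 2 (1 / ε)) ≤ ∑' i, ENNReal.ofReal (l i)) ∧
    (volume ({q : ℝ × ℝ | 0 ≤ q.1 ∧ q.1 ≤ 1 ∧ 0 ≤ q.2 ∧ q.2 ≤ q.1} \
        ⋃ i, Set.Icc (p i) (p i + (l i, l i))) = 0 →
      ∑' i, ENNReal.ofReal (l i) = ⊤) := by
  classical
  set a : ℕ → ℝ := fun i => (p i).1 with ha
  set b : ℕ → ℝ := fun i => (p i).2 with hb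
  set U : Set (ℝ × ℝ) := ⋃ i, Set.Icc (p i) (p i + (l i, l i)) with hU
  set T : Set (ℝ × ℝ) := {q : ℝ × ℝ | 0 ≤ q.1 ∧ q.1 ≤ 1 ∧ 0 ≤ q.2 ∧ q.2 ≤ q.1} with hT
  set LT : Set (ℝ × ℝ) := {q : ℝ × ℝ | 0 ≤ q.2 ∧ q.2 < q.1 ∧ q.1 ≤ 1} with hLT
  -- squares as products
  have hsq : ∀ i, Set.Icc (p i) (p i + (l i, l i)) = Iv a l i ×ˢ Jv b l i := by
    intro i
    rw [Set.Icc_prod_eq]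
    rfl
  have hUm : MeasurableSet U := MeasurableSet.iUnion fun i => measurableSet_Icc
  have hLTm : MeasurableSet LT := by
    refine MeasurableSet.inter ?_ (MeasurableSet.inter ?_ ?_)
    · exact measurable_snd measurableSet_Ici
    · exact measurableSet_lt measurable_snd measurable_fst
    · exact measurable_fst measurableSet_Iic
  have hUsubT : U ⊆ T := Set.iUnion_subset fun i => hsub i
  have hLTsubT : LT ⊆ T := by
    rintro q ⟨h1, h2, h3⟩
    exact ⟨le_trans h1 (le_of_lt h2), h3, h1, le_of_lt h2⟩
  have hvolLT : volume LT = ENNReal.ofReal (1/2) := by rw [hLT]; exact volume_LT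
  -- basic corner facts
  have hba : ∀ i, b i + l i ≤ a i := by
    intro i
    have hmem : (a i, b i + l i) ∈ Set.Icc (p i) (p i + (l i, l i)) := by
      rw [Set.mem_Icc]
      constructor
      · exact ⟨le_refl _, le_add_of_nonneg_right (hl i)⟩
      · exact ⟨le_add_of_nonneg_right (hl i), le_refl _⟩
    exact (hsub i hmem).2.2.2
  -- PART 1
  have part1 : ∀ ε : ℝ, 0 < ε → ε < 1 →
      ENNReal.ofReal ((1 - ε) / 2) ≤ volume U →
      ENNReal.ofReal (1 / 2 * Real.logb 2 (1 / ε)) ≤ ∑' i, ENNReal.ofReal (l i) := by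
    intro ε hε0 hε1 hvol
    rcases eq_or_ne (∑' i, ENNReal.ofReal (l i)) ⊤ with htop | htop
    · rw [htop]; exact le_top
    set σ := (∑' i, ENNReal.ofReal (l i)).toReal with hσdef
    have hσnn : 0 ≤ σ := ENNReal.toReal_nonneg
    have htsum : (∑' i, ENNReal.ofReal (l i)) = ENNReal.ofReal σ :=
      (ENNReal.ofReal_toReal htop).symm
    have hlog2 : (0:ℝ) < Real.log 2 := Real.log_pos one_lt_two
    -- partial sums bound
    have hsumb : ∀ n : ℕ, (∑ i : Fin n, ENNReal.ofReal (2 * l ↑i)) * ENNReal.ofReal (Real.log 2)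
        ≤ ENNReal.ofReal (2 * Real.log 2 * σ) := by
      intro n
      have h1 : (∑ i : Fin n, ENNReal.ofReal (2 * l ↑i))
          ≤ 2 * ∑' i, ENNReal.ofReal (l i) := by
        have heq : ∀ i : Fin n, ENNReal.ofReal (2 * l ↑i) = 2 * ENNReal.ofReal (l ↑i) := by
          intro i
          rw [ENNReal.ofReal_mul (by norm_num), ENNReal.ofReal_ofNat]
        rw [Finset.sum_congr rfl fun i _ => heq i, ← Finset.mul_sum]
        gcongr
        exact le_trans (le_of_eq (Fin.sum_univ_eq_sum_range (fun j => ENNReal.ofReal (l j)) n))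
          (ENNReal.sum_le_tsum (Finset.range n))
      calc (∑ i : Fin n, ENNReal.ofReal (2 * l ↑i)) * ENNReal.ofReal (Real.log 2)
          ≤ (2 * ∑' i, ENNReal.ofReal (l i)) * ENNReal.ofReal (Real.log 2) := by gcongr
        _ = ENNReal.ofReal (2 * Real.log 2 * σ) := by
            rw [htsum]
            rw [show (2:ℝ) * Real.log 2 * σ = 2 * (Real.log 2 * σ) by ring,
              ENNReal.ofReal_mul (by norm_num : (0:ℝ) ≤ 2),
              ENNReal.ofReal_mul (le_of_lt hlog2), ENNReal.ofReal_ofNat]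
            ring
    -- defect bound
    set R : Set (ℝ × ℝ) := LT \ U with hR
    have hRm : MeasurableSet R := hLTm.diff hUm
    have hdef : ∫⁻ z in Set.Icc (0:ℝ) 1, alf a b l Set.univ z ≤ ENNReal.ofReal ε := by
      -- pointwise slice bound
      have hslice : ∀ z ∈ Set.Icc (0:ℝ) 1, alf a b l Set.univ z
          ≤ volume (Prod.mk z ⁻¹' R) + volume ((fun w => (w, z)) ⁻¹' R) := by
        intro z hz01
        have hsub' : Prod.mk z ⁻¹' G a b l Set.univ
            ⊆ (Prod.mk z ⁻¹' R ∪ (fun w => (w, z)) ⁻¹' R) ∪ {z} := by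
          intro w hw
          have hw01 : w ∈ Set.Icc (0:ℝ) 1 := hw.1
          have hnb : ∀ i : ℕ, (z, w) ∉ bad a b l i := by
            intro i
            have h2 := hw.2
            simp only [Set.mem_iInter, Set.mem_compl_iff] at h2
            exact h2 i (Set.mem_univ i)
          rcases lt_trichotomy w z with hlt | heq | hgt
          · refine Or.inl (Or.inl ?_)
            refine ⟨⟨hw01.1, hlt, hz01.2⟩, ?_⟩
            intro hUmem
            obtain ⟨i, hi⟩ := Set.mem_iUnion.1 hUmem
            rw [hsq i] at hi
            exact hnb i (Or.inl ⟨hi.1, hi.2⟩)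
          · exact Or.inr (by simp [heq])
          · refine Or.inl (Or.inr ?_)
            refine ⟨⟨hz01.1, hgt, hw01.2⟩, ?_⟩
            intro hUmem
            obtain ⟨i, hi⟩ := Set.mem_iUnion.1 hUmem
            rw [hsq i] at hi
            exact hnb i (Or.inr ⟨hi.2, hi.1⟩)
        calc alf a b l Set.univ z
            ≤ volume ((Prod.mk z ⁻¹' R ∪ (fun w => (w, z)) ⁻¹' R) ∪ {z}) :=
              measure_mono hsub'
          _ ≤ volume (Prod.mk z ⁻¹' R ∪ (fun w => (w, z)) ⁻¹' R) + volume ({z} : Set ℝ) :=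
              measure_union_le _ _
          _ = volume (Prod.mk z ⁻¹' R ∪ (fun w => (w, z)) ⁻¹' R) := by
              rw [measure_singleton, add_zero]
          _ ≤ volume (Prod.mk z ⁻¹' R) + volume ((fun w => (w, z)) ⁻¹' R) :=
              measure_union_le _ _
      have hmeas1 : Measurable (fun z => volume (Prod.mk z ⁻¹' R)) :=
        measurable_measure_prodMk_left hRm
      have hmeas2 : Measurable (fun z => volume ((fun w => (w, z)) ⁻¹' R)) :=
        measurable_measure_prodMk_right hRm
      have hint : ∫⁻ z in Set.Icc (0:ℝ) 1, alf a b l Set.univ z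
          ≤ ∫⁻ z in Set.Icc (0:ℝ) 1,
              (volume (Prod.mk z ⁻¹' R) + volume ((fun w => (w, z)) ⁻¹' R)) := by
        refine lintegral_mono_ae ?_
        filter_upwards [ae_restrict_mem (measurableSet_Icc)] with z hz
        exact hslice z hz
      have hint2 : ∫⁻ z in Set.Icc (0:ℝ) 1,
          (volume (Prod.mk z ⁻¹' R) + volume ((fun w => (w, z)) ⁻¹' R))
          ≤ volume R + volume R := by
        rw [lintegral_add_left hmeas1]
        gcongr
        · calc ∫⁻ z in Set.Icc (0:ℝ) 1, volume (Prod.mk z ⁻¹' R)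
              ≤ ∫⁻ z, volume (Prod.mk z ⁻¹' R) := setLIntegral_le_lintegral _ _
            _ = volume R := by
                rw [MeasureTheory.Measure.volume_eq_prod, Measure.prod_apply hRm]
        · calc ∫⁻ z in Set.Icc (0:ℝ) 1, volume ((fun w => (w, z)) ⁻¹' R)
              ≤ ∫⁻ z, volume ((fun w => (w, z)) ⁻¹' R) := setLIntegral_le_lintegral _ _
            _ = volume R := by
                rw [MeasureTheory.Measure.volume_eq_prod, Measure.prod_apply_symm hRm]
      -- volume R ≤ ofReal (ε/2)
      have hUdiff : volume (U \ LT) = 0 := by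
        refine measure_mono_null ?_ volume_diag
        rintro q ⟨hqU, hqLT⟩
        have hqT := hUsubT hqU
        have hq1 : 0 ≤ q.1 ∧ q.1 ≤ 1 ∧ 0 ≤ q.2 ∧ q.2 ≤ q.1 := hqT
        show q.1 = q.2
        by_contra hne
        have hlt : q.2 < q.1 := lt_of_le_of_ne hq1.2.2.2 (fun h => hne h.symm)
        exact hqLT ⟨hq1.2.2.1, hlt, hq1.2.1⟩
      have hULT : volume (U ∩ LT) = volume U := by
        have h2 := measure_inter_add_diff (μ := (volume : Measure (ℝ × ℝ))) U hLTm
        rw [hUdiff, add_zero] at h2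
        exact h2
      have hRle : volume R ≤ ENNReal.ofReal (ε/2) := by
        have h1 : volume R + ENNReal.ofReal ((1-ε)/2) ≤ ENNReal.ofReal (1/2) := by
          have h2 := measure_diff_add_inter (μ := (volume : Measure (ℝ × ℝ))) LT hUm
          rw [Set.inter_comm, hULT, hvolLT] at h2
          calc volume R + ENNReal.ofReal ((1-ε)/2) ≤ volume R + volume U := by gcongr
            _ = ENNReal.ofReal (1/2) := h2
        have h3 := ENNReal.le_sub_of_add_le_right ENNReal.ofReal_ne_top h1
        refine h3.trans (le_of_eq ?_)
        rw [← ENNReal.ofReal_sub _ (by nlinarith : (0:ℝ) ≤ (1-ε)/2)]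
        congr 1
        ring
      calc ∫⁻ z in Set.Icc (0:ℝ) 1, alf a b l Set.univ z
          ≤ volume R + volume R := hint.trans hint2
        _ ≤ ENNReal.ofReal (ε/2) + ENNReal.ofReal (ε/2) := by gcongr
        _ = ENNReal.ofReal ε := by
            rw [← ENNReal.ofReal_add (by positivity) (by positivity)]
            congr 1
            ring
    -- conclude part 1
    have hfin := final_real a b l hl hba hε0 hdef
      (show (0:ℝ) ≤ 2 * Real.log 2 * σ by positivity) hsumb
    have hlogb : 1/2 * Real.logb 2 (1/ε) ≤ σ := by
      rw [Real.logb]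
      have h3 : Real.log (1/ε) / Real.log 2 ≤ 2*σ := by
        rw [div_le_iff₀ hlog2]
        nlinarith [hfin]
      linarith
    calc ENNReal.ofReal (1/2 * Real.logb 2 (1/ε)) ≤ ENNReal.ofReal σ :=
          ENNReal.ofReal_le_ofReal hlogb
      _ = ∑' i, ENNReal.ofReal (l i) := htsum.symm
  refine ⟨part1, ?_⟩
  -- PART 2
  intro h0
  have hvolU : ENNReal.ofReal (1/2) ≤ volume U := by
    have h1 : volume (LT \ U) = 0 :=
      measure_mono_null (Set.diff_subset_diff_left hLTsubT) h0
    have h2 := measure_diff_add_inter (μ := (volume : Measure (ℝ × ℝ))) LT hUm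
    rw [h1, zero_add, hvolLT] at h2
    calc ENNReal.ofReal (1/2) = volume (LT ∩ U) := h2.symm
      _ ≤ volume U := measure_mono Set.inter_subset_right
  by_contra hne
  set σ := (∑' i, ENNReal.ofReal (l i)).toReal with hσdef
  have hσnn : 0 ≤ σ := ENNReal.toReal_nonneg
  obtain ⟨k, hk⟩ := exists_nat_gt σ
  set m := 2 * (k + 1) with hm
  set ε : ℝ := (2⁻¹ : ℝ) ^ m with hε
  have hε0 : 0 < ε := by positivity
  have hε1 : ε < 1 := by
    apply pow_lt_one₀ (by norm_num) (by norm_num)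
    omega
  have hvol' : ENNReal.ofReal ((1 - ε)/2) ≤ volume U :=
    le_trans (ENNReal.ofReal_le_ofReal (by nlinarith)) hvolU
  have hpart := part1 ε hε0 hε1 hvol'
  have hlogb : Real.logb 2 (1/ε) = m := by
    have h1 : (1:ℝ)/ε = 2^m := by
      rw [hε, one_div, inv_pow, inv_inv]
    rw [h1, Real.logb_pow, Real.logb_self_eq_one (by norm_num), mul_one]
  rw [hlogb] at hpart
  have hle : (1/2 : ℝ) * m ≤ σ := by
    rw [← ENNReal.ofReal_toReal hne] at hpart
    exact (ENNReal.ofReal_le_ofReal_iff hσnn).1 hpart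
  have : (k:ℝ) + 1 ≤ σ := by
    rw [hm] at hle
    push_cast at hle
    linarith
  linarith
end
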